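/- Let p_X and p_g be probability density functions on a measurable space 𝕏 ⊆ ℝ^d (with Lebesgue measure μ) which are strictly positive on their common support, let α > 0 with α ≠ 1, and let D* = p_X/(p_X + p_g). Then the Rényi GAN generator loss of order α evaluated at the optimal discriminator satisfies V_α(D*) := (1/(α−1)) log(∫ p_X (D*)^{α−1} dμ) + (1/(α−1)) log(∫ p_g (1 − D*)^{α−1} dμ) = 2 · JR_α(p_X ∥ p_g) − 2 log 2 ≥ −2 log 2, with equality if and only if p_g = p_X almost everywhere. -/

import Mathlib

open MeasureTheory Filter Topology Set


/-- Bernoulli gap lemma. -/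
lemma bern_gap {α a b : ℝ} (hα : 0 < α) (hα1 : α ≠ 1) (ha : 0 ≤ a) (hb : 0 < b) :
    0 ≤ (a ^ α * b ^ (1 - α) - (α * a + (1 - α) * b)) / (α - 1) ∧
    ((a ^ α * b ^ (1 - α) - (α * a + (1 - α) * b)) / (α - 1) = 0 → a = b) := by
  set s : ℝ := a / b - 1 with hs_def
  have hs : -1 ≤ s := by
    have : 0 ≤ a / b := div_nonneg ha hb.le
    simp only [hs_def]; linarith
  have hab : a = b * (1 + s) := by
    rw [hs_def, show 1 + (a / b - 1) = a / b by ring, mul_div_assoc', mul_comm, mul_div_assoc,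
      div_self hb.ne', mul_one]
  have h1s : 0 ≤ 1 + s := by linarith
  have key : a ^ α * b ^ (1 - α) - (α * a + (1 - α) * b)
      = b * ((1 + s) ^ α - (1 + α * s)) := by
    have e1 : a ^ α = b ^ α * (1 + s) ^ α := by
      rw [hab, Real.mul_rpow hb.le h1s]
    have e2 : b ^ α * b ^ (1 - α) = b := by
      rw [← Real.rpow_add hb]; norm_num
    calc a ^ α * b ^ (1 - α) - (α * a + (1 - α) * b)
        = b ^ α * b ^ (1 - α) * (1 + s) ^ α - (α * (b * (1 + s)) + (1 - α) * b) := by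
          rw [e1, hab]; ring
      _ = b * ((1 + s) ^ α - (1 + α * s)) := by rw [e2]; ring
  rcases lt_or_gt_of_ne hα1 with hlt | hgt
  · -- α < 1
    have hineq : (1 + s) ^ α ≤ 1 + α * s := rpow_one_add_le_one_add_mul_self hs hα.le hlt.le
    constructor
    · rw [key, div_nonneg_iff]
      right; constructor <;> nlinarith
    · intro h0
      by_contra hne
      have hsne : s ≠ 0 := by
        intro h; apply hne; rw [hab, h]; ring
      have hstrict : (1 + s) ^ α < 1 + α * s := rpow_one_add_lt_one_add_mul_self hs hsne hα hlt
      have hb' : b * ((1 + s) ^ α - (1 + α * s)) < 0 := by nlinarith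
      rw [div_eq_zero_iff] at h0
      rcases h0 with h0 | h0
      · rw [key] at h0; linarith
      · exact absurd h0 (sub_ne_zero.mpr hα1)
  · -- 1 < α
    have hineq : 1 + α * s ≤ (1 + s) ^ α := one_add_mul_self_le_rpow_one_add hs hgt.le
    constructor
    · rw [key, div_nonneg_iff]
      left; constructor <;> nlinarith
    · intro h0
      by_contra hne
      have hsne : s ≠ 0 := by
        intro h; apply hne; rw [hab, h]; ring
      have hstrict : 1 + α * s < (1 + s) ^ α := one_add_mul_self_lt_rpow_one_add hs hsne hgt
      have hb' : 0 < b * ((1 + s) ^ α - (1 + α * s)) := by nlinarith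
      rw [div_eq_zero_iff] at h0
      rcases h0 with h0 | h0
      · rw [key] at h0; linarith
      · exact absurd h0 (sub_ne_zero.mpr hα1)

/-- Pointwise identity for the V integrand. -/
lemma point_eq {a b α : ℝ} (ha : 0 < a) (hb : 0 < b) :
    a * (a / (a + b)) ^ (α - 1) = (2:ℝ) ^ (1 - α) * (a ^ α * ((a + b) / 2) ^ (1 - α)) := by
  have hs : 0 < a + b := by linarith
  have e1 : a ^ (1:ℝ) * a ^ (α - 1) = a ^ α := by
    rw [← Real.rpow_add ha]; ring_nf
  rw [Real.rpow_one] at e1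
  have e2 : (a + b) ^ (1 - α) * (a + b) ^ (α - 1) = 1 := by
    rw [← Real.rpow_add hs]; norm_num
  rw [Real.div_rpow ha.le hs.le, Real.div_rpow hs.le (by norm_num : (0:ℝ) ≤ 2)]
  have hS : (a + b) ^ (α - 1) ≠ 0 := (Real.rpow_pos_of_pos hs _).ne'
  have h2 : ((2:ℝ)) ^ (1 - α) ≠ 0 := (Real.rpow_pos_of_pos two_pos _).ne'
  field_simp
  linear_combination e1 - a ^ α * e2

lemma point_bound {p α : ℝ} (hp : 0 < p) : p ^ α * (p / 2) ^ (1 - α) = 2 ^ (α - 1) * p := by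
  rw [Real.div_rpow hp.le (by norm_num : (0:ℝ) ≤ 2)]
  have e1 : p ^ α * p ^ (1 - α) = p := by rw [← Real.rpow_add hp]; norm_num
  have e2 : (2:ℝ) ^ (α - 1) * 2 ^ (1 - α) = 1 := by rw [← Real.rpow_add two_pos]; norm_num
  have h2 : ((2:ℝ)) ^ (1 - α) ≠ 0 := (Real.rpow_pos_of_pos two_pos _).ne'
  field_simp
  linear_combination e1 - p * e2

lemma aux_main {d : ℕ} (p q : (Fin d → ℝ) → ℝ) (X : Set (Fin d → ℝ)) (hX : MeasurableSet X)
    (hp_meas : Measurable p) (hq_meas : Measurable q)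
    (hp_pos : ∀ x ∈ X, 0 < p x) (hq_pos : ∀ x ∈ X, 0 < q x)
    (hp_int : IntegrableOn p X) (hq_int : IntegrableOn q X)
    (hp_one : ∫ x in X, p x = 1) (hq_one : ∫ x in X, q x = 1)
    (α : ℝ) (hα : 0 < α) (hα1 : α ≠ 1) :
    IntegrableOn (fun x => p x ^ α * ((p x + q x) / 2) ^ (1 - α)) X ∧
    0 < (∫ x in X, p x ^ α * ((p x + q x) / 2) ^ (1 - α)) ∧
    0 ≤ (1 / (α - 1)) * Real.log (∫ x in X, p x ^ α * ((p x + q x) / 2) ^ (1 - α)) ∧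
    ((1 / (α - 1)) * Real.log (∫ x in X, p x ^ α * ((p x + q x) / 2) ^ (1 - α)) = 0 →
      q =ᵐ[volume.restrict X] p) ∧
    (q =ᵐ[volume.restrict X] p →
      (∫ x in X, p x ^ α * ((p x + q x) / 2) ^ (1 - α)) = 1) := by
  set f : (Fin d → ℝ) → ℝ := fun x => p x ^ α * ((p x + q x) / 2) ^ (1 - α) with hf_def
  set lin : (Fin d → ℝ) → ℝ := fun x => α * p x + (1 - α) * ((p x + q x) / 2) with hlin_def
  have hμX : volume X ≠ 0 := by
    intro h
    rw [show (volume.restrict X : Measure _) = 0 from Measure.restrict_eq_zero.mpr h,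
      integral_zero_measure] at hp_one
    norm_num at hp_one
  have hm_pos : ∀ x ∈ X, 0 < (p x + q x) / 2 := fun x hx => by
    have := hp_pos x hx; have := hq_pos x hx; linarith
  have hm_int : IntegrableOn (fun x => (p x + q x) / 2) X := (hp_int.add hq_int).div_const 2
  have hm_one : ∫ x in X, (p x + q x) / 2 = 1 := by
    rw [integral_div, integral_add hp_int hq_int, hp_one, hq_one]; norm_num
  have hf_meas : Measurable f := by measurability
  have hlin_int : IntegrableOn lin X := (hp_int.const_mul α).add (hm_int.const_mul (1 - α))
  have hlin_one : ∫ x in X, lin x = 1 := by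
    simp only [hlin_def]
    rw [integral_add ((hp_int.const_mul α)) (hm_int.const_mul (1 - α)),
      integral_const_mul, integral_const_mul, hp_one, hm_one]; ring
  -- pointwise gap facts
  have hgap : ∀ x ∈ X, 0 ≤ (f x - lin x) / (α - 1) ∧ ((f x - lin x) / (α - 1) = 0 → p x = (p x + q x) / 2) :=
    fun x hx => bern_gap hα hα1 (hp_pos x hx).le (hm_pos x hx)
  have hα1' : α - 1 ≠ 0 := sub_ne_zero.mpr hα1
  -- integrability of f
  have hf_int : IntegrableOn f X := by
    rcases lt_or_gt_of_ne hα1 with hlt | hgt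
    · refine Integrable.mono' hlin_int hf_meas.aestronglyMeasurable ?_
      filter_upwards [ae_restrict_mem hX] with x hx
      have h1 := (hgap x hx).1
      have hfx : 0 ≤ f x :=
        mul_nonneg (Real.rpow_nonneg (hp_pos x hx).le _) (Real.rpow_nonneg (hm_pos x hx).le _)
      rw [Real.norm_eq_abs, abs_of_nonneg hfx]
      rcases div_nonneg_iff.mp h1 with ⟨h2, h3⟩ | ⟨h2, h3⟩
      · linarith
      · linarith
    · refine Integrable.mono' (hp_int.const_mul ((2:ℝ) ^ (α - 1))) hf_meas.aestronglyMeasurable ?_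
      filter_upwards [ae_restrict_mem hX] with x hx
      have hpx := hp_pos x hx
      have hfx : 0 ≤ f x :=
        mul_nonneg (Real.rpow_nonneg hpx.le _) (Real.rpow_nonneg (hm_pos x hx).le _)
      rw [Real.norm_eq_abs, abs_of_nonneg hfx]
      have hb : ((p x + q x) / 2) ^ (1 - α) ≤ (p x / 2) ^ (1 - α) := by
        apply Real.rpow_le_rpow_of_nonpos (by linarith)
        · have := hq_pos x hx; linarith
        · linarith
      calc f x ≤ p x ^ α * (p x / 2) ^ (1 - α) := by
            exact mul_le_mul_of_nonneg_left hb (Real.rpow_nonneg hpx.le _)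
        _ = 2 ^ (α - 1) * p x := point_bound hpx
  set I : ℝ := ∫ x in X, f x with hI_def
  -- gap integral
  set g : (Fin d → ℝ) → ℝ := fun x => (f x - lin x) / (α - 1) with hg_def
  have hg_int : IntegrableOn g X := (hf_int.sub hlin_int).div_const (α - 1)
  have hg_nonneg : 0 ≤ᵐ[volume.restrict X] g := by
    filter_upwards [ae_restrict_mem hX] with x hx using (hgap x hx).1
  have hg_integral : ∫ x in X, g x = (I - 1) / (α - 1) := by
    simp only [hg_def]
    rw [integral_div, integral_sub hf_int hlin_int, hlin_one]
  have hIgap : 0 ≤ (I - 1) / (α - 1) := hg_integral ▸ integral_nonneg_of_ae hg_nonneg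
  -- positivity of I
  have hf_nonneg : 0 ≤ᵐ[volume.restrict X] f := by
    filter_upwards [ae_restrict_mem hX] with x hx
    exact mul_nonneg (Real.rpow_nonneg (hp_pos x hx).le _) (Real.rpow_nonneg (hm_pos x hx).le _)
  have hI_pos : 0 < I := by
    rw [hI_def, setIntegral_pos_iff_support_of_nonneg_ae hf_nonneg hf_int]
    refine lt_of_lt_of_le (zero_lt_iff.mpr hμX) (measure_mono (subset_inter ?_ Subset.rfl))
    intro x hx
    exact (mul_pos (Real.rpow_pos_of_pos (hp_pos x hx) _)
      (Real.rpow_pos_of_pos (hm_pos x hx) _)).ne'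
  -- main conclusions
  refine ⟨hf_int, hI_pos, ?_, ?_, ?_⟩
  · -- nonnegativity of (1/(α-1)) log I
    rcases lt_or_gt_of_ne hα1 with hlt | hgt
    · have hI_le : I ≤ 1 := by
        rcases div_nonneg_iff.mp hIgap with ⟨h2, h3⟩ | ⟨h2, h3⟩
        · linarith
        · linarith
      have h1 : Real.log I ≤ 0 := Real.log_nonpos hI_pos.le hI_le
      have h2 : 1 / (α - 1) < 0 := by
        apply div_neg_of_pos_of_neg one_pos; linarith
      nlinarith
    · have hI_ge : 1 ≤ I := by
        rcases div_nonneg_iff.mp hIgap with ⟨h2, h3⟩ | ⟨h2, h3⟩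
        · linarith
        · linarith
      exact mul_nonneg (le_of_lt (div_pos one_pos (by linarith))) (Real.log_nonneg hI_ge)
  · -- equality implies ae equal
    intro hL
    have hc : (1:ℝ) / (α - 1) ≠ 0 := one_div_ne_zero hα1'
    have hlogI : Real.log I = 0 := by
      rcases mul_eq_zero.mp hL with h | h
      · exact absurd h hc
      · exact h
    have hI1 : I = 1 := by
      rcases Real.log_eq_zero.mp hlogI with h | h | h
      · exact absurd h hI_pos.ne'
      · exact h
      · linarith
    have hg0 : ∫ x in X, g x = 0 := by rw [hg_integral, hI1]; simp
    have hgae : g =ᵐ[volume.restrict X] 0 :=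
      (integral_eq_zero_iff_of_nonneg_ae hg_nonneg hg_int).mp hg0
    filter_upwards [ae_restrict_mem hX, hgae] with x hx hg0x
    have := (hgap x hx).2 hg0x
    linarith
  · -- ae equal implies I = 1
    intro hqp
    have hfp : f =ᵐ[volume.restrict X] p := by
      filter_upwards [ae_restrict_mem hX, hqp] with x hx hqx
      have hpx := hp_pos x hx
      simp only [hf_def, hqx]
      rw [show (p x + p x) / 2 = p x by ring, ← Real.rpow_add hpx]
      norm_num
    rw [hI_def, integral_congr_ae hfp, hp_one]

/-- Rényi GAN generator loss at the optimal discriminator.  Let `pX`, `pg` be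
probability densities on `𝕏 ⊆ ℝ^d` (Lebesgue measure), strictly positive on their
common support `X`, let `α > 0`, `α ≠ 1`, and let `D* = pX/(pX + pg)`.  Then
`V_α(D*) = (1/(α-1)) log ∫ pX (D*)^(α-1) + (1/(α-1)) log ∫ pg (1 - D*)^(α-1)`
satisfies `V_α(D*) = 2 JR_α(pX ‖ pg) - 2 log 2 ≥ -2 log 2`, with equality iff
`pg = pX` almost everywhere, where
`JR_α(f‖h) = (1/2) D_α(f ‖ (f+h)/2) + (1/2) D_α(h ‖ (f+h)/2)` and
`D_α(f‖h) = (1/(α-1)) log ∫ f^α h^(1-α) dμ`. -/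
theorem stmt_17 {d : ℕ}
    (pX pg : (Fin d → ℝ) → ℝ) (X : Set (Fin d → ℝ)) (hX : MeasurableSet X)
    (hpX_meas : Measurable pX) (hpg_meas : Measurable pg)
    (hpX_nonneg : ∀ x, 0 ≤ pX x) (hpg_nonneg : ∀ x, 0 ≤ pg x)
    (hpX_pos : ∀ x ∈ X, 0 < pX x) (hpg_pos : ∀ x ∈ X, 0 < pg x)
    (hpX_int : IntegrableOn pX X) (hpg_int : IntegrableOn pg X)
    (hpX_one : ∫ x in X, pX x = 1) (hpg_one : ∫ x in X, pg x = 1)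
    (α : ℝ) (hα : 0 < α) (hα1 : α ≠ 1) :
    ∀ V JR : ℝ,
      V = (1 / (α - 1)) *
            Real.log (∫ x in X, pX x * (pX x / (pX x + pg x)) ^ (α - 1)) +
          (1 / (α - 1)) *
            Real.log (∫ x in X, pg x * (1 - pX x / (pX x + pg x)) ^ (α - 1)) →
      JR = (1 / 2) * ((1 / (α - 1)) *
              Real.log (∫ x in X, pX x ^ α * ((pX x + pg x) / 2) ^ (1 - α))) +
           (1 / 2) * ((1 / (α - 1)) *
              Real.log (∫ x in X, pg x ^ α * ((pX x + pg x) / 2) ^ (1 - α))) →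
      (V = 2 * JR - 2 * Real.log 2 ∧ -(2 * Real.log 2) ≤ V ∧
        (V = -(2 * Real.log 2) ↔ pg =ᵐ[volume.restrict X] pX)) := by
  intro V JR hV hJR
  have hα1' : α - 1 ≠ 0 := sub_ne_zero.mpr hα1
  obtain ⟨hint1, hI1pos, hB1, hC1, hD1⟩ := aux_main pX pg X hX hpX_meas hpg_meas hpX_pos
    hpg_pos hpX_int hpg_int hpX_one hpg_one α hα hα1
  obtain ⟨hint2, hI2pos, hB2, hC2, hD2⟩ := aux_main pg pX X hX hpg_meas hpX_meas hpg_pos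
    hpX_pos hpg_int hpX_int hpg_one hpX_one α hα hα1
  have hcomm : (fun x => pg x ^ α * ((pg x + pX x) / 2) ^ (1 - α))
      = fun x => pg x ^ α * ((pX x + pg x) / 2) ^ (1 - α) := by
    funext x; rw [add_comm (pg x)]
  rw [hcomm] at hI2pos hB2 hC2 hD2
  set I1 : ℝ := ∫ x in X, pX x ^ α * ((pX x + pg x) / 2) ^ (1 - α) with hI1_def
  set I2 : ℝ := ∫ x in X, pg x ^ α * ((pX x + pg x) / 2) ^ (1 - α) with hI2_def
  -- rewrite the V integrals
  have hV1 : ∫ x in X, pX x * (pX x / (pX x + pg x)) ^ (α - 1) = 2 ^ (1 - α) * I1 := by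
    rw [setIntegral_congr_fun hX (g := fun x => (2:ℝ) ^ (1 - α) * (pX x ^ α * ((pX x + pg x) / 2) ^ (1 - α)))
      (fun x hx => point_eq (hpX_pos x hx) (hpg_pos x hx)), integral_const_mul]
  have hV2 : ∫ x in X, pg x * (1 - pX x / (pX x + pg x)) ^ (α - 1) = 2 ^ (1 - α) * I2 := by
    rw [setIntegral_congr_fun hX (g := fun x => (2:ℝ) ^ (1 - α) * (pg x ^ α * ((pX x + pg x) / 2) ^ (1 - α)))
      ?_, integral_const_mul]
    intro x hx
    have hpx := hpX_pos x hx
    have hqx := hpg_pos x hx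
    have hsum : pX x + pg x ≠ 0 := by positivity
    have h1 : 1 - pX x / (pX x + pg x) = pg x / (pg x + pX x) := by
      rw [add_comm (pg x), eq_div_iff hsum, sub_mul, one_mul, div_mul_cancel₀ _ hsum]
      ring
    simp only [h1]
    rw [point_eq hqx hpx, add_comm (pg x)]
  have h2pow : ((2:ℝ)) ^ (1 - α) ≠ 0 := (Real.rpow_pos_of_pos two_pos _).ne'
  have hlog1 : Real.log ((2:ℝ) ^ (1 - α) * I1) = (1 - α) * Real.log 2 + Real.log I1 := by
    rw [Real.log_mul h2pow hI1pos.ne', Real.log_rpow two_pos]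
  have hlog2 : Real.log ((2:ℝ) ^ (1 - α) * I2) = (1 - α) * Real.log 2 + Real.log I2 := by
    rw [Real.log_mul h2pow hI2pos.ne', Real.log_rpow two_pos]
  have hc : (1 / (α - 1)) * (1 - α) = -1 := by
    field_simp
    ring
  rw [hV1, hV2, hlog1, hlog2] at hV
  have hVval : V = (1 / (α - 1)) * Real.log I1 + (1 / (α - 1)) * Real.log I2
      - 2 * Real.log 2 := by
    rw [hV]; linear_combination (2 * Real.log 2) * hc
  have hJRval : 2 * JR = (1 / (α - 1)) * Real.log I1 + (1 / (α - 1)) * Real.log I2 := by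
    rw [hJR]; ring
  refine ⟨by linarith, by linarith, ?_, ?_⟩
  · intro hVeq
    have hL1 : (1 / (α - 1)) * Real.log I1 = 0 := by linarith
    exact hC1 hL1
  · intro hae
    have h1 : I1 = 1 := hD1 hae
    have h2 : I2 = 1 := hD2 hae.symm
    rw [hVval, h1, h2, Real.log_one]
    ring
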